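/- Suppose a_n = n^α (1 + c_a/n + O(1/n²)) with a_n > 0, α > 0, c_a ∈ ℝ. Then the sequence of ratios (a_{n-1}/a_n) has finite total variation: ∑_{n≥2} |a_{n-1}/a_n − a_{n-2}/a_{n-1}| < ∞. -/

import Mathlib

set_option maxHeartbeats 1000000


/-- If `a_n = n^α (1 + c_a/n + O(1/n²))` with `a_n > 0` and `α > 0`, then the sequence of
ratios `(a_{n-1}/a_n)` has finite total variation:
`∑_{n≥2} |a_{n-1}/a_n − a_{n-2}/a_{n-1}| < ∞`. -/
theorem ratio_a_bounded_variation (a : ℕ → ℝ) (ha : ∀ n, 0 < a n)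
    (α ca C : ℝ) (hα : 0 < α) (N : ℕ)
    (hasym : ∀ n : ℕ, N ≤ n → |a n / (n : ℝ) ^ α - 1 - ca / n| ≤ C / (n : ℝ) ^ 2) :
    Summable (fun n : ℕ => |a (n + 1) / a (n + 2) - a n / a (n + 1)|) := by
  set C' : ℝ := max C 1 with hC'def
  have hC'pos : (0:ℝ) < C' := lt_max_of_lt_right one_pos
  set K : ℝ := 2 * (|ca| + 2 * C') with hKdef
  obtain ⟨M, hMN, hMc⟩ : ∃ M : ℕ, N + 1 ≤ M ∧ 2 * (|ca| + C') ≤ (M : ℝ) := by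
    obtain ⟨m, hm⟩ := exists_nat_ge (2 * (|ca| + C'))
    refine ⟨max (N+1) m, le_max_left _ _, le_trans hm ?_⟩
    exact_mod_cast Nat.cast_le.mpr (le_max_right _ _)
  have hM1 : 1 ≤ M := le_trans (by omega) hMN
  set s : ℕ → ℝ := fun n => ((n:ℝ)/((n:ℝ)+1)) ^ α with hsdef
  have hs_nonneg : ∀ n, 0 ≤ s n := fun n => Real.rpow_nonneg (by positivity) _
  have hs_le_one : ∀ n, s n ≤ 1 := by
    intro n
    apply Real.rpow_le_one (by positivity) _ hα.le
    rw [div_le_one (by positivity)]; linarith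
  have hsmono : Monotone s := by
    intro n m hnm
    apply Real.rpow_le_rpow (by positivity) _ hα.le
    rw [div_le_div_iff₀ (by positivity) (by positivity)]
    have : (n:ℝ) ≤ m := Nat.cast_le.mpr hnm
    nlinarith
  set u : ℕ → ℝ := fun m => a m / (m:ℝ) ^ α with hudef
  -- key error bound
  have key : ∀ n : ℕ, M ≤ n → |a n / a (n+1) - s n| ≤ K / (n:ℝ)^2 := by
    intro n hn
    have hn1 : 1 ≤ n := le_trans hM1 hn
    have hnR : (1:ℝ) ≤ (n:ℝ) := by exact_mod_cast hn1
    have hnpos : (0:ℝ) < (n:ℝ) := by linarith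
    have hn1pos : (0:ℝ) < (n:ℝ) + 1 := by linarith
    have hnM : 2 * (|ca| + C') ≤ (n:ℝ) := le_trans hMc (by exact_mod_cast hn)
    have hpow : (0:ℝ) < (n:ℝ) ^ α := Real.rpow_pos_of_pos hnpos _
    have hpow1 : (0:ℝ) < ((n:ℝ)+1) ^ α := Real.rpow_pos_of_pos hn1pos _
    have hun1cast : ((n+1 : ℕ) : ℝ) = (n:ℝ) + 1 := by push_cast; ring
    -- error terms
    have hbn : |u n - 1 - ca / (n:ℝ)| ≤ C' / (n : ℝ) ^ 2 := by
      refine le_trans (hasym n (by omega)) ?_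
      gcongr
      exact le_max_left _ _
    have hbn1 : |u (n+1) - 1 - ca / ((n:ℝ)+1)| ≤ C' / ((n:ℝ)+1) ^ 2 := by
      have h := hasym (n+1) (by omega)
      rw [hudef]
      simp only [hun1cast] at h ⊢
      refine le_trans h ?_
      gcongr
      exact le_max_left _ _
    have habs1 := (abs_le.mp hbn1).1
    have habs1' := (abs_le.mp hbn1).2
    -- lower bound on u (n+1)
    have hca1 : -(|ca| / ((n:ℝ)+1)) ≤ ca / ((n:ℝ)+1) := by
      rw [neg_div']
      gcongr
      exact neg_abs_le ca
    have hC1 : C' / ((n:ℝ)+1)^2 ≤ C' / ((n:ℝ)+1) := by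
      gcongr
      nlinarith
    have hhalf : |ca| / ((n:ℝ)+1) + C' / ((n:ℝ)+1) ≤ 1/2 := by
      rw [← add_div, div_le_iff₀ hn1pos]
      nlinarith [abs_nonneg ca]
    have hulb : (1:ℝ)/2 ≤ u (n+1) := by linarith
    have hupos : (0:ℝ) < u (n+1) := by linarith
    -- difference bound
    have hdiff : |u n - u (n+1)| ≤ (|ca| + 2*C') / (n:ℝ)^2 := by
      have e1 : u n - u (n+1) = (u n - 1 - ca/(n:ℝ)) - (u (n+1) - 1 - ca/((n:ℝ)+1))
          + ca/((n:ℝ)*((n:ℝ)+1)) := by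
        field_simp
        ring
      have t3 : |ca/((n:ℝ)*((n:ℝ)+1))| ≤ |ca|/(n:ℝ)^2 := by
        rw [abs_div, abs_of_pos (show (0:ℝ) < (n:ℝ)*((n:ℝ)+1) by positivity),
          div_le_div_iff₀ (by positivity) (by positivity)]
        nlinarith [abs_nonneg ca]
      have t4 : C'/((n:ℝ)+1)^2 ≤ C'/(n:ℝ)^2 := by
        rw [div_le_div_iff₀ (by positivity) (by positivity)]
        nlinarith [hC'pos.le]
      calc |u n - u (n+1)|
          ≤ |(u n - 1 - ca/(n:ℝ)) - (u (n+1) - 1 - ca/((n:ℝ)+1))| + |ca/((n:ℝ)*((n:ℝ)+1))| := by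
            rw [e1]; exact abs_add_le _ _
        _ ≤ |u n - 1 - ca/(n:ℝ)| + |u (n+1) - 1 - ca/((n:ℝ)+1)| + |ca/((n:ℝ)*((n:ℝ)+1))| := by
            have := abs_sub (u n - 1 - ca/(n:ℝ)) (u (n+1) - 1 - ca/((n:ℝ)+1))
            linarith
        _ ≤ C' / (n:ℝ)^2 + C' / (n:ℝ)^2 + |ca|/(n:ℝ)^2 := by linarith
        _ = (|ca| + 2*C') / (n:ℝ)^2 := by ring
    -- rewrite the ratio
    have han : a n = u n * (n:ℝ)^α := by rw [hudef]; field_simp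
    have han1 : a (n+1) = u (n+1) * ((n:ℝ)+1)^α := by
      rw [hudef]
      simp only [hun1cast]
      field_simp
    have hs' : s n = (n:ℝ)^α / ((n:ℝ)+1)^α :=
      Real.div_rpow (by positivity) (by positivity) α
    have hrs : a n / a (n+1) - s n = s n * ((u n - u (n+1)) / u (n+1)) := by
      rw [hs', han, han1]
      field_simp
    rw [hrs, abs_mul, abs_div, abs_of_nonneg (hs_nonneg n), abs_of_pos hupos]
    have hq : |u n - u (n+1)| / u (n+1) ≤ ((|ca| + 2*C') / (n:ℝ)^2) / (1/2) :=
      div_le_div₀ (by positivity) hdiff (by norm_num) hulb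
    calc s n * (|u n - u (n+1)| / u (n+1))
        ≤ 1 * (((|ca| + 2*C') / (n:ℝ)^2) / (1/2)) := by
          apply mul_le_mul (hs_le_one n) hq (by positivity) (by norm_num)
      _ = K / (n:ℝ)^2 := by rw [hKdef]; field_simp
  -- summability of the monotone telescoping part
  have hsum_t : Summable (fun n => s (n+1) - s n) := by
    apply summable_of_sum_range_le (c := 1)
    · intro n
      have := hsmono (Nat.le_succ n)
      simpa using sub_nonneg.mpr this
    · intro n
      rw [Finset.sum_range_sub]
      have := hs_le_one n
      have := hs_nonneg 0
      linarith
  have hsum_inv : Summable (fun n : ℕ => K / (n:ℝ)^2) := by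
    have h := (Real.summable_one_div_nat_pow (p := 2)).mpr (by norm_num)
    simpa [mul_one_div, div_eq_mul_inv] using h.mul_left K
  -- conclude by comparison after shifting by M
  rw [← summable_nat_add_iff M]
  apply Summable.of_nonneg_of_le (fun n => abs_nonneg _)
    (f := fun n => (s (n+M+1) - s (n+M)) + (K/((n+M : ℕ):ℝ)^2 + K/((n+M+1 : ℕ):ℝ)^2))
  · intro n
    have h1 := key (n+M) (Nat.le_add_left _ _)
    have h2 := key (n+M+1) (by omega)
    have hts : s (n+M) ≤ s (n+M+1) := hsmono (Nat.le_succ _)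
    have tri : |a (n+M+1) / a (n+M+2) - a (n+M) / a (n+M+1)|
        ≤ |a (n+M+1) / a (n+M+2) - s (n+M+1)| + (s (n+M+1) - s (n+M))
          + |a (n+M) / a (n+M+1) - s (n+M)| := by
      have e : a (n+M+1) / a (n+M+2) - a (n+M) / a (n+M+1)
          = (a (n+M+1) / a (n+M+2) - s (n+M+1)) + (s (n+M+1) - s (n+M))
            - (a (n+M) / a (n+M+1) - s (n+M)) := by ring
      rw [e]
      calc |(a (n+M+1) / a (n+M+2) - s (n+M+1)) + (s (n+M+1) - s (n+M))
            - (a (n+M) / a (n+M+1) - s (n+M))|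
          ≤ |(a (n+M+1) / a (n+M+2) - s (n+M+1)) + (s (n+M+1) - s (n+M))|
            + |a (n+M) / a (n+M+1) - s (n+M)| := abs_sub _ _
        _ ≤ |a (n+M+1) / a (n+M+2) - s (n+M+1)| + |s (n+M+1) - s (n+M)|
            + |a (n+M) / a (n+M+1) - s (n+M)| := by
              have := abs_add_le (a (n+M+1) / a (n+M+2) - s (n+M+1)) (s (n+M+1) - s (n+M))
              linarith
        _ = |a (n+M+1) / a (n+M+2) - s (n+M+1)| + (s (n+M+1) - s (n+M))
            + |a (n+M) / a (n+M+1) - s (n+M)| := by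
              rw [abs_of_nonneg (sub_nonneg.mpr hts)]
    have : a (n+M+1) / a (n+M+1+1) = a (n+M+1) / a (n+M+2) := by norm_num
    rw [this] at h2
    show |a (n + M + 1) / a (n + M + 2) - a (n + M) / a (n + M + 1)| ≤ _
    linarith
  · have h1 : Summable (fun n : ℕ => s (n+M+1) - s (n+M)) :=
      (summable_nat_add_iff M).mpr hsum_t
    have h2 : Summable (fun n : ℕ => K/((n+M : ℕ):ℝ)^2) :=
      (summable_nat_add_iff M).mpr hsum_inv
    have h3 : Summable (fun n : ℕ => K/((n+M+1 : ℕ):ℝ)^2) := by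
      have := (summable_nat_add_iff (M+1)).mpr hsum_inv
      exact this.congr (fun n => by norm_num [Nat.add_assoc])
    exact h1.add (h2.add h3)
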